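/- arXiv:2312.14388 — 2 statements merged into one kernel-verified Lean document; each statement's English description precedes it below -/
import Mathlib

section
/- Let ε ≥ 0, δ ∈ [0,1), let R be an (ε,δ)-LDP randomizer from D to S, and let x_0, x_1 ∈ D. Let X̃_0 and X̃_1 be the probability distributions on the four-point set {A, 0, 1, B} given by X̃_0({A}) = δ, X̃_0({0}) = (1−δ)e^ε/(1+e^ε), X̃_0({1}) = (1−δ)/(1+e^ε), X̃_0({B}) = 0, and X̃_1({A}) = 0, X̃_1({0}) = (1−δ)/(1+e^ε), X̃_1({1}) = (1−δ)e^ε/(1+e^ε), X̃_1({B}) = δ. Then there exists a single Markov kernel proc from {A,0,1,B} to S such that for b ∈ {0,1}, R(x_b) equals the composition of X̃_b with proc (i.e., R(x_b) is a post-processing of X̃_b). -/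
open MeasureTheory ProbabilityTheory
open scoped ENNReal

noncomputable section

/-- `R` is an `(ε,δ)`-LDP randomizer. -/
def IsLDPKernel {D S : Type*} [MeasurableSpace D] [MeasurableSpace S]
    (R : Kernel D S) (ε δ : ℝ) : Prop :=
  ∀ x x' : D, ∀ A : Set S, MeasurableSet A →
    R x A ≤ ENNReal.ofReal (Real.exp ε) * R x' A + ENNReal.ofReal δ

/-- The four-point distribution `X̃₀` on `{A, 0, 1, B}` (encoded as `Fin 4`, in this order):
`X̃₀({A}) = δ`, `X̃₀({0}) = (1-δ)e^ε/(1+e^ε)`, `X̃₀({1}) = (1-δ)/(1+e^ε)`, `X̃₀({B}) = 0`. -/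
def tildeX0 (ε δ : ℝ) : Measure (Fin 4) :=
  ENNReal.ofReal δ • Measure.dirac 0 +
    ENNReal.ofReal ((1 - δ) * Real.exp ε / (1 + Real.exp ε)) • Measure.dirac 1 +
    ENNReal.ofReal ((1 - δ) / (1 + Real.exp ε)) • Measure.dirac 2

/-- The four-point distribution `X̃₁` on `{A, 0, 1, B}` (encoded as `Fin 4`):
`X̃₁({A}) = 0`, `X̃₁({0}) = (1-δ)/(1+e^ε)`, `X̃₁({1}) = (1-δ)e^ε/(1+e^ε)`, `X̃₁({B}) = δ`. -/
def tildeX1 (ε δ : ℝ) : Measure (Fin 4) :=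
  ENNReal.ofReal ((1 - δ) / (1 + Real.exp ε)) • Measure.dirac 1 +
    ENNReal.ofReal ((1 - δ) * Real.exp ε / (1 + Real.exp ε)) • Measure.dirac 2 +
    ENNReal.ofReal δ • Measure.dirac 3

lemma hockey_aux {S : Type*} [MeasurableSpace S] (m : Measure S) (f g : S → ℝ≥0∞)
    (hf : Measurable f) (hg : Measurable g) (k d : ℝ≥0∞) (hk : k ≠ ⊤)
    (hgfin : ∫⁻ x, g x ∂m ≠ ⊤)
    (hle : ∀ A : Set S, MeasurableSet A → m.withDensity f A ≤ k * m.withDensity g A + d) :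
    ∫⁻ x, (f x - k * g x) ∂m ≤ d := by
  set E := {x | k * g x < f x} with hE_def
  have hEm : MeasurableSet E := measurableSet_lt (hg.const_mul k) hf
  have h1 : ∫⁻ x, (f x - k * g x) ∂m = ∫⁻ x in E, (f x - k * g x) ∂m := by
    rw [← lintegral_indicator hEm]
    refine lintegral_congr fun x => ?_
    by_cases hx : x ∈ E
    · simp [hx]
    · simp only [Set.indicator, hx, if_false]
      exact tsub_eq_zero_of_le (not_lt.1 hx)
  have hfin : ∫⁻ x in E, k * g x ∂m ≠ ⊤ := by
    rw [lintegral_const_mul k hg]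
    refine ENNReal.mul_ne_top hk (ne_top_of_le_ne_top hgfin ?_)
    exact setLIntegral_le_lintegral E g
  have h2 : ∫⁻ x in E, (f x - k * g x) ∂m
      = ∫⁻ x in E, f x ∂m - ∫⁻ x in E, k * g x ∂m := by
    refine lintegral_sub (hg.const_mul k) hfin ?_
    exact (ae_restrict_iff' hEm).2 (ae_of_all _ fun x hx => le_of_lt hx)
  have h3 : ∫⁻ x in E, f x ∂m = m.withDensity f E := (withDensity_apply f hEm).symm
  have h4 : ∫⁻ x in E, k * g x ∂m = k * m.withDensity g E := by
    rw [lintegral_const_mul k hg, withDensity_apply g hEm]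
  rw [h1, h2, h3, h4]
  exact tsub_le_iff_left.2 (hle E hEm)


/-- any `(ε,δ)`-LDP randomizer evaluated at two points is a common
post-processing (via a single Markov kernel) of the dominating pair `X̃₀, X̃₁`. -/
theorem statement_4 {D S : Type*} [MeasurableSpace D] [MeasurableSpace S]
    (ε δ : ℝ) (hε : 0 ≤ ε) (hδ : δ ∈ Set.Ico (0:ℝ) 1)
    (R : Kernel D S) [IsMarkovKernel R] (hR : IsLDPKernel R ε δ) (x0 x1 : D) :
    ∃ proc : Kernel (Fin 4) S, IsMarkovKernel proc ∧
      R x0 = (tildeX0 ε δ).bind (fun z => proc z) ∧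
      R x1 = (tildeX1 ε δ).bind (fun z => proc z) := by
  classical
  set P : Measure S := R x0 with hP_def
  set Q : Measure S := R x1 with hQ_def
  have hPprob : IsProbabilityMeasure P := inferInstance
  have hQprob : IsProbabilityMeasure Q := inferInstance
  set m : Measure S := P + Q with hm_def
  have hPm : P ≪ m := Measure.absolutelyContinuous_of_le (Measure.le_add_right le_rfl)
  have hQm : Q ≪ m := Measure.absolutelyContinuous_of_le (Measure.le_add_left le_rfl)
  set f : S → ℝ≥0∞ := P.rnDeriv m with hf_def
  set g : S → ℝ≥0∞ := Q.rnDeriv m with hg_def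
  have hf : Measurable f := Measure.measurable_rnDeriv P m
  have hg : Measurable g := Measure.measurable_rnDeriv Q m
  have hfP : m.withDensity f = P := Measure.withDensity_rnDeriv_eq P m hPm
  have hgQ : m.withDensity g = Q := Measure.withDensity_rnDeriv_eq Q m hQm
  have hf1 : ∫⁻ x, f x ∂m = 1 := by rw [Measure.lintegral_rnDeriv hPm]; exact measure_univ
  have hg1 : ∫⁻ x, g x ∂m = 1 := by rw [Measure.lintegral_rnDeriv hQm]; exact measure_univ
  have hffin : ∀ᵐ x ∂m, f x ≠ ⊤ :=
    (Measure.rnDeriv_lt_top P m).mono fun x hx => hx.ne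
  -- scalars
  set k : ℝ≥0∞ := ENNReal.ofReal (Real.exp ε) with hk_def
  have hk1 : 1 ≤ k := by
    rw [hk_def, ← ENNReal.ofReal_one]
    exact ENNReal.ofReal_le_ofReal (Real.one_le_exp hε)
  have hkt : k ≠ ⊤ := ENNReal.ofReal_ne_top
  have hk0 : k ≠ 0 := by
    intro h; rw [h] at hk1; simp at hk1
  set d : ℝ≥0∞ := ENNReal.ofReal δ with hd_def
  have hd1 : d < 1 := by
    rw [hd_def, ← ENNReal.ofReal_one]
    exact (ENNReal.ofReal_lt_ofReal_iff one_pos).2 hδ.2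
  have hdt : d ≠ ⊤ := ENNReal.ofReal_ne_top
  set θ : ℝ≥0∞ := 1 - d with hθ_def
  have hθ0 : θ ≠ 0 := by
    rw [hθ_def]; exact (tsub_pos_of_lt hd1).ne'
  have hθt : θ ≠ ⊤ := by
    rw [hθ_def]; exact ne_top_of_le_ne_top ENNReal.one_ne_top tsub_le_self
  have hθ1 : θ ≤ 1 := by rw [hθ_def]; exact tsub_le_self
  have hdθ : 1 - θ = d := by
    rw [hθ_def]; exact ENNReal.sub_sub_cancel ENNReal.one_ne_top hd1.le
  -- hockey sticks
  have hhsPQ : ∀ A : Set S, MeasurableSet A →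
      m.withDensity f A ≤ k * m.withDensity g A + d := by
    intro A hA; rw [hfP, hgQ]; exact hR x0 x1 A hA
  have hhsQP : ∀ A : Set S, MeasurableSet A →
      m.withDensity g A ≤ k * m.withDensity f A + d := by
    intro A hA; rw [hfP, hgQ]; exact hR x1 x0 A hA
  set a : ℝ≥0∞ := ∫⁻ x, (f x - k * g x) ∂m with ha_def
  have ha : a ≤ d :=
    hockey_aux m f g hf hg k d hkt (by rw [hg1]; exact ENNReal.one_ne_top) hhsPQ
  set b : ℝ≥0∞ := ∫⁻ x, (g x - k * f x) ∂m with hb_def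
  have hb : b ≤ d :=
    hockey_aux m g f hg hf k d hkt (by rw [hf1]; exact ENNReal.one_ne_top) hhsQP
  have hat : a ≠ ⊤ := ne_top_of_le_ne_top hdt ha
  have hbt : b ≠ ⊤ := ne_top_of_le_ne_top hdt hb

  -- the chain of densities
  set c₁ : S → ℝ≥0∞ := fun x => k⁻¹ * min (k * g x) (f x) with hc₁_def
  set c₂ : S → ℝ≥0∞ := fun x => min (g x) (k * f x) with hc₂_def
  set c₃ : S → ℝ≥0∞ := fun x => min (k * g x) (f x) with hc₃_def
  have hc₁m : Measurable c₁ := ((hg.const_mul k).min hf).const_mul k⁻¹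
  have hc₂m : Measurable c₂ := hg.min (hf.const_mul k)
  have hc₃m : Measurable c₃ := (hg.const_mul k).min hf
  have hkk : k * k⁻¹ = 1 := ENNReal.mul_inv_cancel hk0 hkt
  have hc3c1 : ∀ x, c₃ x = k * c₁ x := by
    intro x; rw [hc₁_def, hc₃_def, ← mul_assoc, hkk, one_mul]
  have hc1g : ∀ x, c₁ x ≤ g x := by
    intro x
    calc k⁻¹ * min (k * g x) (f x) ≤ k⁻¹ * (k * g x) :=
          mul_le_mul_right (min_le_left _ _) _
      _ = g x := by rw [← mul_assoc, mul_comm k⁻¹ k, hkk, one_mul]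
  have hc1c2 : ∀ x, c₁ x ≤ c₂ x := by
    intro x
    refine le_min (hc1g x) ?_
    calc k⁻¹ * min (k * g x) (f x) ≤ 1 * f x := by
          exact mul_le_mul' (ENNReal.inv_le_one.2 hk1) (min_le_right _ _)
      _ = f x := one_mul _
      _ ≤ k * f x := le_mul_of_one_le_left zero_le hk1
  have hc2g : ∀ x, c₂ x ≤ g x := fun x => min_le_left _ _
  have hc2kf : ∀ x, c₂ x ≤ k * f x := fun x => min_le_right _ _
  -- the identity f - c₃ = f - k*g (pointwise)
  have hfc3 : ∀ x, f x - c₃ x = f x - k * g x := by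
    intro x
    rcases le_total (f x) (k * g x) with h | h
    · rw [hc₃_def]
      simp only [min_eq_right h]
      rw [tsub_self, tsub_eq_zero_of_le h]
    · rw [hc₃_def]; simp only [min_eq_left h]
  -- c₃ = f - (f - k*g) a.e.
  have hc3ae : ∀ᵐ x ∂m, c₃ x = f x - (f x - k * g x) := by
    filter_upwards [hffin] with x hx
    rcases le_total (f x) (k * g x) with h | h
    · rw [hc₃_def]
      simp only [min_eq_right h]
      rw [tsub_eq_zero_of_le h, tsub_zero]
    · rw [hc₃_def]
      simp only [min_eq_left h]
      rw [ENNReal.sub_sub_cancel hx h]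
  have hfkg_fin : ∫⁻ x, (f x - k * g x) ∂m ≠ ⊤ := by rw [← ha_def]; exact hat
  have hintc3 : ∫⁻ x, c₃ x ∂m = 1 - a := by
    rw [lintegral_congr_ae hc3ae,
      lintegral_sub (show Measurable (fun x => f x - k * g x) from hf.sub (hg.const_mul k)) hfkg_fin
        (ae_of_all _ fun x => tsub_le_self), hf1, ha_def]
  set M : ℝ≥0∞ := ∫⁻ x, c₁ x ∂m with hM_def
  have hkM : k * M = 1 - a := by
    rw [hM_def, ← lintegral_const_mul k hc₁m, ← hintc3]
    exact lintegral_congr fun x => (hc3c1 x).symm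
  have h1a0 : (1:ℝ≥0∞) - a ≠ 0 := by
    have : θ ≤ 1 - a := tsub_le_tsub_left ha 1
    exact fun h => hθ0 (le_antisymm (h ▸ this) zero_le)
  have h1at : (1:ℝ≥0∞) - a ≠ ⊤ := ne_top_of_le_ne_top ENNReal.one_ne_top tsub_le_self
  have hM0 : M ≠ 0 := by
    intro h; rw [h, mul_zero] at hkM; exact h1a0 hkM.symm
  have hMt : M ≠ ⊤ := by
    intro h; rw [h, ENNReal.mul_top hk0] at hkM; exact h1at hkM.symm
  -- N
  have hgkf_fin : ∫⁻ x, (g x - k * f x) ∂m ≠ ⊤ := by rw [← hb_def]; exact hbt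
  have hgfin : ∀ᵐ x ∂m, g x ≠ ⊤ :=
    (Measure.rnDeriv_lt_top Q m).mono fun x hx => hx.ne
  have hc2ae : ∀ᵐ x ∂m, c₂ x = g x - (g x - k * f x) := by
    filter_upwards [hgfin] with x hx
    rcases le_total (g x) (k * f x) with h | h
    · rw [hc₂_def]
      simp only [min_eq_left h]
      rw [tsub_eq_zero_of_le h, tsub_zero]
    · rw [hc₂_def]
      simp only [min_eq_right h]
      rw [ENNReal.sub_sub_cancel hx h]
  set N : ℝ≥0∞ := ∫⁻ x, c₂ x ∂m with hN_def
  have hN : N = 1 - b := by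
    rw [hN_def, lintegral_congr_ae hc2ae,
      lintegral_sub (show Measurable (fun x => g x - k * f x) from hg.sub (hf.const_mul k)) hgkf_fin
        (ae_of_all _ fun x => tsub_le_self), hg1, hb_def]
  have hMN : M ≤ N := lintegral_mono fun x => hc1c2 x
  have hNt : N ≠ ⊤ := by rw [hN]; exact ne_top_of_le_ne_top ENNReal.one_ne_top tsub_le_self
  have hθN : θ ≤ N := by rw [hN, hθ_def]; exact tsub_le_tsub_left hb 1

  -- the interpolated density h (the part of Q matched against the middle)
  set h : S → ℝ≥0∞ :=
    (if θ ≤ M then (fun x => θ/M * c₁ x)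
      else fun x => c₁ x + (θ - M)/(N - M) * (c₂ x - c₁ x)) with hh_def
  have hhm : Measurable h := by
    rw [hh_def]; split_ifs
    · exact hc₁m.const_mul _
    · exact hc₁m.add ((hc₂m.sub hc₁m).const_mul _)
  have hh_le_c2 : ∀ x, h x ≤ c₂ x := by
    intro x; rw [hh_def]; split_ifs with hcase
    · calc θ/M * c₁ x ≤ 1 * c₁ x :=
            mul_le_mul_left (ENNReal.div_le_of_le_mul (by rwa [one_mul])) _
        _ = c₁ x := one_mul _
        _ ≤ c₂ x := hc1c2 x
    · have hMθ : M < θ := lt_of_not_ge hcase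
      calc c₁ x + (θ - M)/(N - M) * (c₂ x - c₁ x)
          ≤ c₁ x + 1 * (c₂ x - c₁ x) := by
            refine add_le_add_right (mul_le_mul_left ?_ _) _
            exact ENNReal.div_le_of_le_mul (by rw [one_mul]; exact tsub_le_tsub_right hθN _)
        _ = c₂ x := by rw [one_mul, add_tsub_cancel_of_le (hc1c2 x)]
  have hh_le_g : ∀ x, h x ≤ g x := fun x => (hh_le_c2 x).trans (hc2g x)
  have hh_le_kf : ∀ x, h x ≤ k * f x := fun x => (hh_le_c2 x).trans (hc2kf x)
  have hintc2c1 : ∫⁻ x, (c₂ x - c₁ x) ∂m = N - M := by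
    rw [lintegral_sub hc₁m (by rw [← hM_def]; exact hMt) (ae_of_all _ fun x => hc1c2 x),
      ← hM_def, ← hN_def]
  have hh_int : ∫⁻ x, h x ∂m = θ := by
    rw [hh_def]; split_ifs with hcase
    · rw [lintegral_const_mul _ hc₁m, ← hM_def, ENNReal.div_mul_cancel hM0 hMt]
    · have hMθ : M < θ := lt_of_not_ge hcase
      rw [lintegral_add_left hc₁m, lintegral_const_mul _ (show Measurable (fun x => c₂ x - c₁ x) from hc₂m.sub hc₁m), hintc2c1,
        ← hM_def, ENNReal.div_mul_cancel (tsub_pos_of_lt (hMθ.trans_le hθN)).ne'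
          (ne_top_of_le_ne_top hNt tsub_le_self),
        add_tsub_cancel_of_le hMθ.le]
  -- lower and upper envelopes for the abort density α
  set low : S → ℝ≥0∞ := fun x => f x - k * h x with hlow_def
  set up : S → ℝ≥0∞ := fun x => f x - k⁻¹ * h x with hup_def
  have hlowm : Measurable low := hf.sub (hhm.const_mul k)
  have hupm : Measurable up := hf.sub (hhm.const_mul k⁻¹)
  have hlowup : ∀ x, low x ≤ up x := by
    intro x
    refine tsub_le_tsub_left (mul_le_mul_left ?_ _) _
    exact (ENNReal.inv_le_one.2 hk1).trans hk1
  set L : ℝ≥0∞ := ∫⁻ x, low x ∂m with hL_def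
  set U : ℝ≥0∞ := ∫⁻ x, up x ∂m with hU_def
  -- L ≤ d
  have hL : L ≤ d := by
    rw [hL_def, hlow_def]
    simp only [hh_def]
    split_ifs with hcase
    · -- h = (θ/M) c₁; bound f - k h ≤ (f - c₃) + (c₃ - (θ/M) c₃)
      have hkh : ∀ x, k * (θ/M * c₁ x) = θ/M * c₃ x := by
        intro x; rw [hc3c1 x]; ring
      have hb1 : ∀ x, f x - k * (θ/M * c₁ x) ≤ (f x - c₃ x) + (c₃ x - θ/M * c₃ x) := by
        intro x
        rw [hkh x]
        calc f x - θ/M * c₃ x ≤ ((f x - c₃ x) + c₃ x) - θ/M * c₃ x :=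
              tsub_le_tsub_right le_tsub_add _
          _ ≤ (f x - c₃ x) + (c₃ x - θ/M * c₃ x) := add_tsub_le_assoc
      have hint2 : ∫⁻ x, (c₃ x - θ/M * c₃ x) ∂m = (1 - a) - k * θ := by
        have hmono : ∀ x, θ/M * c₃ x ≤ c₃ x := by
          intro x
          calc θ/M * c₃ x ≤ 1 * c₃ x :=
                mul_le_mul_left (ENNReal.div_le_of_le_mul (by rwa [one_mul])) _
            _ = c₃ x := one_mul _
        have hintscaled : ∫⁻ x, θ/M * c₃ x ∂m = k * θ := by
          rw [lintegral_const_mul _ hc₃m, hintc3, ← hkM]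
          rw [← mul_assoc, mul_comm (θ/M) k, mul_assoc, ENNReal.div_mul_cancel hM0 hMt]
        rw [lintegral_sub (hc₃m.const_mul _) (by rw [hintscaled]; exact ENNReal.mul_ne_top hkt hθt)
          (ae_of_all _ hmono), hintc3, hintscaled]
      calc ∫⁻ x, (f x - k * (θ/M * c₁ x)) ∂m
          ≤ ∫⁻ x, ((f x - c₃ x) + (c₃ x - θ/M * c₃ x)) ∂m := lintegral_mono hb1
        _ = a + ((1 - a) - k * θ) := by
            rw [lintegral_add_left (show Measurable (fun x => f x - c₃ x) from hf.sub hc₃m), hint2, ha_def]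
            congr 1
            exact lintegral_congr fun x => hfc3 x
        _ ≤ a + ((1 - a) - θ) := by
            exact add_le_add_right (tsub_le_tsub_left (le_mul_of_one_le_left zero_le hk1) _) _
        _ ≤ a + (d - a) := by
            refine add_le_add_right ?_ _
            have hone : (1:ℝ≥0∞) - a = (1 - d) + (d - a) :=
              (tsub_add_tsub_cancel hd1.le ha).symm
            rw [hθ_def, hone, ENNReal.add_sub_cancel_left (ne_top_of_le_ne_top ENNReal.one_ne_top tsub_le_self)]
        _ = d := add_tsub_cancel_of_le ha
    · -- h ≥ c₁, so f - k h ≤ f - c₃ = f - k g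
      have hb1 : ∀ x, f x - k * (c₁ x + (θ - M)/(N - M) * (c₂ x - c₁ x)) ≤ f x - k * g x := by
        intro x
        rw [← hfc3 x]
        refine tsub_le_tsub_left ?_ _
        rw [hc3c1 x]
        exact mul_le_mul_right le_self_add _
      calc ∫⁻ x, (f x - k * (c₁ x + (θ - M)/(N - M) * (c₂ x - c₁ x))) ∂m
          ≤ ∫⁻ x, (f x - k * g x) ∂m := lintegral_mono hb1
        _ = a := ha_def.symm
        _ ≤ d := ha
  have hLt : L ≠ ⊤ := ne_top_of_le_ne_top hdt hL
  -- U = 1 - k⁻¹ θ and d ≤ U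
  have hinvh_le_f : ∀ x, k⁻¹ * h x ≤ f x := by
    intro x
    calc k⁻¹ * h x ≤ k⁻¹ * (k * f x) := mul_le_mul_right (hh_le_kf x) _
      _ = f x := by rw [← mul_assoc, mul_comm k⁻¹ k, hkk, one_mul]
  have hU : U = 1 - k⁻¹ * θ := by
    rw [hU_def, hup_def]
    rw [lintegral_sub (hhm.const_mul k⁻¹)
      (by rw [lintegral_const_mul _ hhm, hh_int]
          exact ENNReal.mul_ne_top (ENNReal.inv_ne_top.2 hk0) hθt)
      (ae_of_all _ hinvh_le_f), hf1, lintegral_const_mul _ hhm, hh_int]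
  have hdU : d ≤ U := by
    rw [hU, ← hdθ]
    exact tsub_le_tsub_left (mul_le_of_le_one_left zero_le (ENNReal.inv_le_one.2 hk1)) _
  have hUt : U ≠ ⊤ := by
    rw [hU]; exact ne_top_of_le_ne_top ENNReal.one_ne_top tsub_le_self
  -- the abort density α
  set ρ : ℝ≥0∞ := (d - L)/(U - L) with hρ_def
  have hρ1 : ρ ≤ 1 := by
    rw [hρ_def]
    exact ENNReal.div_le_of_le_mul (by rw [one_mul]; exact tsub_le_tsub_right hdU _)
  set α : S → ℝ≥0∞ := fun x => low x + ρ * (up x - low x) with hα_def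
  have hαm : Measurable α := hlowm.add ((hupm.sub hlowm).const_mul ρ)
  have hα_int : ∫⁻ x, α x ∂m = d := by
    rw [hα_def, lintegral_add_left hlowm, lintegral_const_mul _ (show Measurable (fun x => up x - low x) from hupm.sub hlowm),
      lintegral_sub hlowm (by rw [← hL_def]; exact hLt) (ae_of_all _ hlowup),
      ← hL_def, ← hU_def]
    by_cases hUL : U - L = 0
    · have hdL : d = L := le_antisymm (hdU.trans (tsub_eq_zero_iff_le.1 hUL)) hL
      rw [hUL, mul_zero, add_zero, hdL]
    · rw [hρ_def, ENNReal.div_mul_cancel hUL (ne_top_of_le_ne_top hUt tsub_le_self),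
        add_tsub_cancel_of_le hL]
  have hα_le_up : ∀ x, α x ≤ up x := by
    intro x
    calc low x + ρ * (up x - low x) ≤ low x + 1 * (up x - low x) :=
          add_le_add_right (mul_le_mul_left hρ1 _) _
      _ = up x := by rw [one_mul, add_tsub_cancel_of_le (hlowup x)]
  have hα_le_f : ∀ x, α x ≤ f x := fun x => (hα_le_up x).trans tsub_le_self
  have hlow_le_α : ∀ x, low x ≤ α x := fun x => le_self_add
  -- the residual density p
  set p : S → ℝ≥0∞ := fun x => f x - α x with hp_def
  have hpm : Measurable p := hf.sub hαm
  have hp_int : ∫⁻ x, p x ∂m = θ := by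
    rw [hp_def, lintegral_sub hαm (by rw [hα_int]; exact hdt) (ae_of_all _ hα_le_f),
      hf1, hα_int]
  -- key inequalities: p ≤ k h  and  h ≤ k p (a.e.)
  have hF2 : ∀ x, p x ≤ k * h x := by
    intro x
    calc p x = f x - α x := rfl
      _ ≤ f x - low x := tsub_le_tsub_left (hlow_le_α x) _
      _ = f x - (f x - k * h x) := rfl
      _ ≤ k * h x := tsub_le_iff_right.2 le_add_tsub
  have hF3 : ∀ᵐ x ∂m, h x ≤ k * p x := by
    filter_upwards [hffin] with x hx
    have h1 : k⁻¹ * h x ≤ p x := by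
      calc k⁻¹ * h x = f x - (f x - k⁻¹ * h x) :=
            (ENNReal.sub_sub_cancel hx (hinvh_le_f x)).symm
        _ ≤ f x - α x := tsub_le_tsub_left (hα_le_up x) _
    calc h x = k * (k⁻¹ * h x) := by rw [← mul_assoc, hkk, one_mul]
      _ ≤ k * p x := mul_le_mul_right h1 _
  -- the coefficients of the four-point measures
  have hexp_pos : (0:ℝ) < Real.exp ε := Real.exp_pos ε
  have h1e_pos : (0:ℝ) < 1 + Real.exp ε := by linarith
  set C0 : ℝ≥0∞ := ENNReal.ofReal ((1 - δ) * Real.exp ε / (1 + Real.exp ε)) with hC0_def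
  set C1 : ℝ≥0∞ := ENNReal.ofReal ((1 - δ) / (1 + Real.exp ε)) with hC1_def
  have hC0 : C0 = k * C1 := by
    rw [hC0_def, hC1_def, hk_def, ← ENNReal.ofReal_mul hexp_pos.le]
    congr 1
    field_simp
  have hC1k : (1 + k) * C1 = θ := by
    have h1k : (1:ℝ≥0∞) + k = ENNReal.ofReal (1 + Real.exp ε) := by
      rw [hk_def, ENNReal.ofReal_add one_pos.le hexp_pos.le, ENNReal.ofReal_one]
    rw [h1k, hC1_def, ← ENNReal.ofReal_mul h1e_pos.le]
    have : (1 + Real.exp ε) * ((1 - δ) / (1 + Real.exp ε)) = 1 - δ := by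
      field_simp
    rw [this, hθ_def, hd_def, ENNReal.ofReal_sub 1 hδ.1, ENNReal.ofReal_one]
  have hC10 : C1 ≠ 0 := by
    rw [hC1_def]
    exact (ENNReal.ofReal_pos.2 (div_pos (by linarith [hδ.2]) h1e_pos)).ne'
  have hC1t : C1 ≠ ⊤ := ENNReal.ofReal_ne_top
  -- the four component measures
  set μA : Measure S := if d = 0 then P else d⁻¹ • m.withDensity α with hμA_def
  set qB : S → ℝ≥0∞ := fun x => g x - h x with hqB_def
  have hqBm : Measurable qB := hg.sub hhm
  have hqB_int : ∫⁻ x, qB x ∂m = d := by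
    rw [hqB_def, lintegral_sub hhm (by rw [hh_int]; exact hθt) (ae_of_all _ hh_le_g),
      hg1, hh_int, hdθ]
  set μB : Measure S := if d = 0 then Q else d⁻¹ • m.withDensity qB with hμB_def
  have hμA_prob : IsProbabilityMeasure μA := by
    rw [hμA_def]; split_ifs with hd0
    · exact hPprob
    · constructor
      rw [Measure.smul_apply, smul_eq_mul, withDensity_apply _ MeasurableSet.univ,
        Measure.restrict_univ, hα_int]
      exact ENNReal.inv_mul_cancel hd0 hdt
  have hμB_prob : IsProbabilityMeasure μB := by
    rw [hμB_def]; split_ifs with hd0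
    · exact hQprob
    · constructor
      rw [Measure.smul_apply, smul_eq_mul, withDensity_apply _ MeasurableSet.univ,
        Measure.restrict_univ, hqB_int]
      exact ENNReal.inv_mul_cancel hd0 hdt
  have hdA : d • μA = m.withDensity α := by
    rw [hμA_def]; split_ifs with hd0
    · rw [hd0, zero_smul]
      symm
      rw [← Measure.measure_univ_eq_zero, withDensity_apply _ MeasurableSet.univ,
        Measure.restrict_univ, hα_int, hd0]
    · rw [smul_smul, ENNReal.mul_inv_cancel hd0 hdt, one_smul]
  have hdB : d • μB = m.withDensity qB := by
    rw [hμB_def]; split_ifs with hd0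
    · rw [hd0, zero_smul]
      symm
      rw [← Measure.measure_univ_eq_zero, withDensity_apply _ MeasurableSet.univ,
        Measure.restrict_univ, hqB_int, hd0]
    · rw [smul_smul, ENNReal.mul_inv_cancel hd0 hdt, one_smul]
  -- middle components
  set E' : ℝ≥0∞ := θ * (k - 1) with hE'_def
  set w0 : S → ℝ≥0∞ := fun x => k * p x - h x with hw0_def
  set w1 : S → ℝ≥0∞ := fun x => k * h x - p x with hw1_def
  have hw0m : Measurable w0 := (hpm.const_mul k).sub hhm
  have hw1m : Measurable w1 := (hhm.const_mul k).sub hpm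
  set μ0 : Measure S := if k = 1 then θ⁻¹ • m.withDensity p else E'⁻¹ • m.withDensity w0
    with hμ0_def
  set μ1 : Measure S := if k = 1 then θ⁻¹ • m.withDensity p else E'⁻¹ • m.withDensity w1
    with hμ1_def
  have hkθθ : k * θ - θ = E' := by
    rw [hE'_def, ENNReal.mul_sub (fun _ _ => hθt), mul_one, mul_comm θ k]
  have hw0_int : ∫⁻ x, w0 x ∂m = E' := by
    rw [hw0_def, lintegral_sub hhm (by rw [hh_int]; exact hθt) hF3,
      lintegral_const_mul _ hpm, hp_int, hh_int, hkθθ]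
  have hw1_int : ∫⁻ x, w1 x ∂m = E' := by
    rw [hw1_def, lintegral_sub hpm (by rw [hp_int]; exact hθt) (ae_of_all _ hF2),
      lintegral_const_mul _ hhm, hp_int, hh_int, hkθθ]
  have hE't : E' ≠ ⊤ :=
    ENNReal.mul_ne_top hθt (ENNReal.sub_ne_top hkt)
  have hμ0_prob : IsProbabilityMeasure μ0 := by
    rw [hμ0_def]; split_ifs with hkone
    · constructor
      rw [Measure.smul_apply, smul_eq_mul, withDensity_apply _ MeasurableSet.univ,
        Measure.restrict_univ, hp_int]
      exact ENNReal.inv_mul_cancel hθ0 hθt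
    · have hE'0 : E' ≠ 0 := by
        rw [hE'_def]
        exact mul_ne_zero hθ0 (tsub_pos_of_lt (lt_of_le_of_ne hk1 (Ne.symm hkone))).ne'
      constructor
      rw [Measure.smul_apply, smul_eq_mul, withDensity_apply _ MeasurableSet.univ,
        Measure.restrict_univ, hw0_int]
      exact ENNReal.inv_mul_cancel hE'0 hE't
  have hμ1_prob : IsProbabilityMeasure μ1 := by
    rw [hμ1_def]; split_ifs with hkone
    · constructor
      rw [Measure.smul_apply, smul_eq_mul, withDensity_apply _ MeasurableSet.univ,
        Measure.restrict_univ, hp_int]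
      exact ENNReal.inv_mul_cancel hθ0 hθt
    · have hE'0 : E' ≠ 0 := by
        rw [hE'_def]
        exact mul_ne_zero hθ0 (tsub_pos_of_lt (lt_of_le_of_ne hk1 (Ne.symm hkone))).ne'
      constructor
      rw [Measure.smul_apply, smul_eq_mul, withDensity_apply _ MeasurableSet.univ,
        Measure.restrict_univ, hw1_int]
      exact ENNReal.inv_mul_cancel hE'0 hE't
  -- pointwise finiteness
  have hkk1le : (1:ℝ≥0∞) ≤ k * k := hk1.trans (le_mul_of_one_le_left zero_le hk1)
  -- the middle reconstruction identities
  have hsumP : ∀ q : S → ℝ≥0∞, ∀ x : S, k * k * q x = (k * k - 1) * q x + q x := by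
    intro q x
    conv_lhs => rw [← tsub_add_cancel_of_le hkk1le]
    rw [add_mul, one_mul]
  have hkk1 : (1 + k) * (k - 1) = k * k - 1 := by
    rw [ENNReal.mul_sub (fun _ _ => ENNReal.add_ne_top.2 ⟨ENNReal.one_ne_top, hkt⟩),
      mul_one, add_mul, one_mul]
    refine ENNReal.sub_eq_of_eq_add (ENNReal.add_ne_top.2 ⟨ENNReal.one_ne_top, hkt⟩) ?_
    rw [← add_assoc, tsub_add_cancel_of_le hkk1le, add_comm]
  have hcoef1 : k = 1 → C1 * θ⁻¹ + C1 * θ⁻¹ = 1 := by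
    intro hkone
    rw [← add_mul]
    have h2 : C1 + C1 = θ := by rw [← hC1k, hkone]; ring
    rw [h2]
    exact ENNReal.mul_inv_cancel hθ0 hθt
  have hE'0 : k ≠ 1 → E' ≠ 0 := by
    intro hkone
    rw [hE'_def]
    exact mul_ne_zero hθ0 (tsub_pos_of_lt (lt_of_le_of_ne hk1 (Ne.symm hkone))).ne'
  have hscal : k ≠ 1 → C1 * E'⁻¹ * (k * k - 1) = 1 := by
    intro hkone
    have hCE : C1 * (k * k - 1) = E' := by
      rw [← hkk1, mul_left_comm, ← mul_assoc, hC1k, hE'_def]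
    rw [mul_comm C1 E'⁻¹, mul_assoc, hCE]
    exact ENNReal.inv_mul_cancel (hE'0 hkone) hE't
  have midP : C0 • μ0 + C1 • μ1 = m.withDensity p := by
    by_cases hkone : k = 1
    · rw [hμ0_def, hμ1_def, if_pos hkone, if_pos hkone, hC0, hkone, one_mul,
        smul_smul, ← add_smul, hcoef1 hkone, one_smul]
    · have hkey : ∀ᵐ x ∂m, (C0 * E'⁻¹) * w0 x + (C1 * E'⁻¹) * w1 x = p x := by
        filter_upwards [hffin, hF3] with x hx h3
        have hpfx : p x ≠ ⊤ := ne_top_of_le_ne_top hx (by rw [hp_def]; exact tsub_le_self)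
        have hhfx : h x ≠ ⊤ := ne_top_of_le_ne_top (ENNReal.mul_ne_top hkt hx) (hh_le_kf x)
        have hc : k * h x + p x ≠ ⊤ :=
          ENNReal.add_ne_top.2 ⟨ENNReal.mul_ne_top hkt hhfx, hpfx⟩
        have hkh_le : k * h x ≤ k * (k * p x) := mul_le_mul_right h3 _
        have e1 : k * w0 x + k * h x = k * (k * p x) := by
          rw [hw0_def]
          simp only []
          rw [ENNReal.mul_sub (fun _ _ => hkt), tsub_add_cancel_of_le hkh_le]
        have e2 : w1 x + p x = k * h x := by
          rw [hw1_def]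
          simp only []
          rw [tsub_add_cancel_of_le (hF2 x)]
        have key1 : k * w0 x + w1 x = (k * k - 1) * p x := by
          refine (ENNReal.add_left_inj hc).1 ?_
          calc k * w0 x + w1 x + (k * h x + p x)
              = (k * w0 x + k * h x) + (w1 x + p x) := by ring
            _ = k * (k * p x) + k * h x := by rw [e1, e2]
            _ = k * k * p x + k * h x := by rw [mul_assoc]
            _ = ((k * k - 1) * p x + p x) + k * h x := by rw [hsumP p x]
            _ = (k * k - 1) * p x + (k * h x + p x) := by
                rw [add_assoc, add_comm (p x) (k * h x)]
        calc (C0 * E'⁻¹) * w0 x + (C1 * E'⁻¹) * w1 x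
            = (C1 * E'⁻¹) * (k * w0 x + w1 x) := by rw [hC0]; ring
          _ = (C1 * E'⁻¹ * (k * k - 1)) * p x := by rw [key1, ← mul_assoc]
          _ = p x := by rw [hscal hkone, one_mul]
      rw [hμ0_def, hμ1_def, if_neg hkone, if_neg hkone, smul_smul, smul_smul,
        ← withDensity_smul _ hw0m, ← withDensity_smul _ hw1m,
        ← withDensity_add_left (hw0m.const_smul ((C0 * E'⁻¹) : ℝ≥0∞))]
      refine withDensity_congr_ae ?_
      filter_upwards [hkey] with x hxkey
      simpa using hxkey
  have midQ : C1 • μ0 + C0 • μ1 = m.withDensity h := by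
    by_cases hkone : k = 1
    · have hph : p =ᵐ[m] h := by
        filter_upwards [hF3] with x h3
        refine le_antisymm ?_ ?_
        · have h2 := hF2 x; rwa [hkone, one_mul] at h2
        · rwa [hkone, one_mul] at h3
      rw [hμ0_def, hμ1_def, if_pos hkone, if_pos hkone, hC0, hkone, one_mul,
        smul_smul, ← add_smul, hcoef1 hkone, one_smul]
      exact withDensity_congr_ae hph
    · have hkey : ∀ᵐ x ∂m, (C1 * E'⁻¹) * w0 x + (C0 * E'⁻¹) * w1 x = h x := by
        filter_upwards [hffin, hF3] with x hx h3
        have hpfx : p x ≠ ⊤ := ne_top_of_le_ne_top hx (by rw [hp_def]; exact tsub_le_self)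
        have hhfx : h x ≠ ⊤ := ne_top_of_le_ne_top (ENNReal.mul_ne_top hkt hx) (hh_le_kf x)
        have hc : k * p x + h x ≠ ⊤ :=
          ENNReal.add_ne_top.2 ⟨ENNReal.mul_ne_top hkt hpfx, hhfx⟩
        have hkp_le : k * p x ≤ k * (k * h x) := mul_le_mul_right (hF2 x) _
        have e1 : w0 x + h x = k * p x := by
          rw [hw0_def]
          simp only []
          rw [tsub_add_cancel_of_le h3]
        have e2 : k * w1 x + k * p x = k * (k * h x) := by
          rw [hw1_def]
          simp only []
          rw [ENNReal.mul_sub (fun _ _ => hkt), tsub_add_cancel_of_le hkp_le]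
        have key2 : w0 x + k * w1 x = (k * k - 1) * h x := by
          refine (ENNReal.add_left_inj hc).1 ?_
          calc w0 x + k * w1 x + (k * p x + h x)
              = (k * w1 x + k * p x) + (w0 x + h x) := by ring
            _ = k * (k * h x) + k * p x := by rw [e1, e2]
            _ = k * k * h x + k * p x := by rw [mul_assoc]
            _ = ((k * k - 1) * h x + h x) + k * p x := by rw [hsumP h x]
            _ = (k * k - 1) * h x + (k * p x + h x) := by
                rw [add_assoc, add_comm (h x) (k * p x)]
        calc (C1 * E'⁻¹) * w0 x + (C0 * E'⁻¹) * w1 x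
            = (C1 * E'⁻¹) * (w0 x + k * w1 x) := by rw [hC0]; ring
          _ = (C1 * E'⁻¹ * (k * k - 1)) * h x := by rw [key2, ← mul_assoc]
          _ = h x := by rw [hscal hkone, one_mul]
      rw [hμ0_def, hμ1_def, if_neg hkone, if_neg hkone, smul_smul, smul_smul,
        ← withDensity_smul _ hw0m, ← withDensity_smul _ hw1m,
        ← withDensity_add_left (hw0m.const_smul ((C1 * E'⁻¹) : ℝ≥0∞))]
      refine withDensity_congr_ae ?_
      filter_upwards [hkey] with x hxkey
      simpa using hxkey
  -- the decompositions of P and Q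
  have hPdec : P = d • μA + (C0 • μ0 + C1 • μ1) := by
    rw [hdA, midP, ← hfP]
    have hsplit : f =ᵐ[m] fun x => α x + p x := by
      filter_upwards [] with x
      rw [hp_def]
      simp only []
      rw [add_comm, tsub_add_cancel_of_le (hα_le_f x)]
    calc m.withDensity f = m.withDensity (fun x => α x + p x) :=
          withDensity_congr_ae hsplit
      _ = m.withDensity α + m.withDensity p := by
          rw [← withDensity_add_left hαm]
          rfl
  have hQdec : Q = (C1 • μ0 + C0 • μ1) + d • μB := by
    rw [hdB, midQ, ← hgQ]
    have hsplit : g =ᵐ[m] fun x => h x + qB x := by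
      filter_upwards [] with x
      rw [hqB_def]
      simp only []
      rw [add_comm, tsub_add_cancel_of_le (hh_le_g x)]
    calc m.withDensity g = m.withDensity (fun x => h x + qB x) :=
          withDensity_congr_ae hsplit
      _ = m.withDensity h + m.withDensity qB := by
          rw [← withDensity_add_left hhm]
          rfl
  -- the kernel
  set procFun : Fin 4 → Measure S :=
    fun i => if i = 0 then μA else if i = 1 then μ0 else if i = 2 then μ1 else μB
    with hprocFun_def
  have hprocm : Measurable procFun := Measurable.of_discrete
  have hp0 : procFun 0 = μA := by simp [hprocFun_def]
  have hp1 : procFun 1 = μ0 := by simp [hprocFun_def]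
  have hp2 : procFun 2 = μ1 := by simp [hprocFun_def]
  have hp3 : procFun 3 = μB := by simp [hprocFun_def]
  refine ⟨Kernel.mk procFun hprocm, ⟨fun i => ?_⟩, ?_, ?_⟩
  · show IsProbabilityMeasure (procFun i)
    rw [hprocFun_def]
    simp only []
    split_ifs
    exacts [hμA_prob, hμ0_prob, hμ1_prob, hμB_prob]
  · -- R x0
    have hX0 : tildeX0 ε δ = d • Measure.dirac 0 + C0 • Measure.dirac 1 + C1 • Measure.dirac 2 := rfl
    rw [hX0]
    ext A hA
    rw [Measure.bind_apply hA (Kernel.measurable _).aemeasurable]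
    have : ∀ z : Fin 4, (Kernel.mk procFun hprocm) z = procFun z := fun z => rfl
    simp only [this]
    rw [lintegral_add_measure, lintegral_add_measure, lintegral_smul_measure,
      lintegral_smul_measure, lintegral_smul_measure, lintegral_dirac,
      lintegral_dirac, lintegral_dirac, hp0, hp1, hp2, hPdec]
    simp only [Measure.coe_add, Pi.add_apply, Measure.smul_apply, smul_eq_mul]
    ring
  · -- R x1
    have hX1 : tildeX1 ε δ = C1 • Measure.dirac 1 + C0 • Measure.dirac 2 + d • Measure.dirac 3 := rfl
    rw [hX1]
    ext A hA
    rw [Measure.bind_apply hA (Kernel.measurable _).aemeasurable]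
    have : ∀ z : Fin 4, (Kernel.mk procFun hprocm) z = procFun z := fun z => rfl
    simp only [this]
    rw [lintegral_add_measure, lintegral_add_measure, lintegral_smul_measure,
      lintegral_smul_measure, lintegral_smul_measure, lintegral_dirac,
      lintegral_dirac, lintegral_dirac, hp1, hp2, hp3, hQdec]
    simp only [Measure.coe_add, Pi.add_apply, Measure.smul_apply, smul_eq_mul]

end
end

section
/- Let A, P, Q, B be probability measures on a common measurable space, let s = TV(A,P) and t = TV(B,Q), and let F : [0,1] → ℝ be any function such that T(P,Q)(α') ≥ F(α') for all α' ∈ [0,1]. Then for every α ∈ [0, 1−s], T(A,B)(α) ≥ F(α + s) − t. -/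
open MeasureTheory

noncomputable section

/-- The trade-off function `T(U,V)` between two measures. -/
def tradeOff {Ω : Type*} [MeasurableSpace Ω] (U V : Measure Ω) (α : ℝ) : ℝ :=
  sInf {β : ℝ | ∃ φ : Ω → ℝ, Measurable φ ∧ (∀ ω, φ ω ∈ Set.Icc (0:ℝ) 1) ∧
    (∫ ω, φ ω ∂U) ≤ α ∧ β = 1 - ∫ ω, φ ω ∂V}

/-- Total variation distance between two measures. -/
def tvDist {Ω : Type*} [MeasurableSpace Ω] (U V : Measure Ω) : ℝ :=
  sSup {d : ℝ | ∃ A : Set Ω, MeasurableSet A ∧ d = |(U A).toReal - (V A).toReal|}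

section Aux

variable {Ω : Type*} [MeasurableSpace Ω]

lemma integrable_of_Icc (U : Measure Ω) [IsProbabilityMeasure U] {φ : Ω → ℝ}
    (hφ : Measurable φ) (hb : ∀ ω, φ ω ∈ Set.Icc (0:ℝ) 1) :
    Integrable φ U := by
  refine (integrable_const (1:ℝ)).mono' hφ.aestronglyMeasurable ?_
  refine Filter.Eventually.of_forall fun ω => ?_
  rw [Real.norm_eq_abs, abs_of_nonneg (hb ω).1]
  exact (hb ω).2

lemma tvDist_nonneg (U V : Measure Ω) [IsProbabilityMeasure U] [IsProbabilityMeasure V] :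
    0 ≤ tvDist U V := by
  apply le_csSup
  · refine ⟨1, ?_⟩
    rintro d ⟨S, _, rfl⟩
    have h1 : (U S).toReal ∈ Set.Icc (0:ℝ) 1 := by
      constructor
      · exact ENNReal.toReal_nonneg
      · rw [← ENNReal.toReal_one]
        exact ENNReal.toReal_mono ENNReal.one_ne_top prob_le_one
    have h2 : (V S).toReal ∈ Set.Icc (0:ℝ) 1 := by
      constructor
      · exact ENNReal.toReal_nonneg
      · rw [← ENNReal.toReal_one]
        exact ENNReal.toReal_mono ENNReal.one_ne_top prob_le_one
    rw [abs_sub_le_iff]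
    constructor <;> linarith [h1.1, h1.2, h2.1, h2.2]
  · exact ⟨∅, MeasurableSet.empty, by simp⟩

lemma tvDist_bddAbove (U V : Measure Ω) [IsProbabilityMeasure U] [IsProbabilityMeasure V] :
    BddAbove {d : ℝ | ∃ A : Set Ω, MeasurableSet A ∧ d = |(U A).toReal - (V A).toReal|} := by
  refine ⟨1, ?_⟩
  rintro d ⟨S, _, rfl⟩
  have h1 : (U S).toReal ≤ 1 := by
    rw [← ENNReal.toReal_one]; exact ENNReal.toReal_mono ENNReal.one_ne_top prob_le_one
  have h2 : (V S).toReal ≤ 1 := by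
    rw [← ENNReal.toReal_one]; exact ENNReal.toReal_mono ENNReal.one_ne_top prob_le_one
  rw [abs_sub_le_iff]
  constructor <;> linarith [ENNReal.toReal_nonneg (a := U S), ENNReal.toReal_nonneg (a := V S)]

lemma measure_diff_le_tvDist (U V : Measure Ω) [IsProbabilityMeasure U] [IsProbabilityMeasure V]
    {S : Set Ω} (hS : MeasurableSet S) :
    (U S).toReal - (V S).toReal ≤ tvDist U V :=
  le_trans (le_abs_self _) (le_csSup (tvDist_bddAbove U V) ⟨S, hS, rfl⟩)

/-- The layer-cake representation key: difference of integrals bounded by TV. -/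
lemma integral_sub_le_tvDist (U V : Measure Ω) [IsProbabilityMeasure U] [IsProbabilityMeasure V]
    {φ : Ω → ℝ} (hφ : Measurable φ) (hb : ∀ ω, φ ω ∈ Set.Icc (0:ℝ) 1) :
    (∫ ω, φ ω ∂U) - (∫ ω, φ ω ∂V) ≤ tvDist U V := by
  have hiu : Integrable φ U := integrable_of_Icc U hφ hb
  have hiv : Integrable φ V := integrable_of_Icc V hφ hb
  have hnnU : 0 ≤ᵐ[U] φ := Filter.Eventually.of_forall fun ω => (hb ω).1
  have hnnV : 0 ≤ᵐ[V] φ := Filter.Eventually.of_forall fun ω => (hb ω).1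
  have hbdU : φ ≤ᵐ[U] (fun _ => (1:ℝ)) := Filter.Eventually.of_forall fun ω => (hb ω).2
  have hbdV : φ ≤ᵐ[V] (fun _ => (1:ℝ)) := Filter.Eventually.of_forall fun ω => (hb ω).2
  rw [hiu.integral_eq_integral_Ioc_meas_le hnnU hbdU,
    hiv.integral_eq_integral_Ioc_meas_le hnnV hbdV]
  have hmeasU : Measurable fun t : ℝ => (U {a | t ≤ φ a}).toReal := by
    refine Measurable.ennreal_toReal ?_
    exact Antitone.measurable (fun _ _ hst => measure_mono (fun _ h => le_trans hst h))
  have hmeasV : Measurable fun t : ℝ => (V {a | t ≤ φ a}).toReal := by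
    refine Measurable.ennreal_toReal ?_
    exact Antitone.measurable (fun _ _ hst => measure_mono (fun _ h => le_trans hst h))
  have hintU : Integrable (fun t : ℝ => (U {a | t ≤ φ a}).toReal)
      (volume.restrict (Set.Ioc (0:ℝ) 1)) := by
    refine (integrable_const (1:ℝ)).mono' hmeasU.aestronglyMeasurable ?_
    refine Filter.Eventually.of_forall fun t => ?_
    rw [Real.norm_eq_abs, abs_of_nonneg ENNReal.toReal_nonneg, ← ENNReal.toReal_one]
    exact ENNReal.toReal_mono ENNReal.one_ne_top prob_le_one
  have hintV : Integrable (fun t : ℝ => (V {a | t ≤ φ a}).toReal)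
      (volume.restrict (Set.Ioc (0:ℝ) 1)) := by
    refine (integrable_const (1:ℝ)).mono' hmeasV.aestronglyMeasurable ?_
    refine Filter.Eventually.of_forall fun t => ?_
    rw [Real.norm_eq_abs, abs_of_nonneg ENNReal.toReal_nonneg, ← ENNReal.toReal_one]
    exact ENNReal.toReal_mono ENNReal.one_ne_top prob_le_one
  show (∫ t in Set.Ioc (0:ℝ) 1, (U {a | t ≤ φ a}).toReal) - (∫ t in Set.Ioc (0:ℝ) 1, (V {a | t ≤ φ a}).toReal) ≤ tvDist U V
  rw [← integral_sub hintU hintV]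
  have hle : ∀ t : ℝ, (U {a | t ≤ φ a}).toReal - (V {a | t ≤ φ a}).toReal ≤ tvDist U V :=
    fun t => measure_diff_le_tvDist U V (measurableSet_le measurable_const hφ)
  calc (∫ t in Set.Ioc (0:ℝ) 1, ((U {a | t ≤ φ a}).toReal - (V {a | t ≤ φ a}).toReal))
      ≤ ∫ _ in Set.Ioc (0:ℝ) 1, tvDist U V := by
        refine integral_mono (hintU.sub hintV) (integrable_const _) fun t => hle t
    _ = tvDist U V := by simp

lemma integral_le_one (U : Measure Ω) [IsProbabilityMeasure U] {φ : Ω → ℝ}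
    (hφ : Measurable φ) (hb : ∀ ω, φ ω ∈ Set.Icc (0:ℝ) 1) :
    ∫ ω, φ ω ∂U ≤ 1 := by
  calc ∫ ω, φ ω ∂U ≤ ∫ _ : Ω, (1:ℝ) ∂U :=
        integral_mono (integrable_of_Icc U hφ hb) (integrable_const _) fun ω => (hb ω).2
    _ = 1 := by simp

lemma tradeOff_bddBelow (U V : Measure Ω) [IsProbabilityMeasure U] [IsProbabilityMeasure V] :
    BddBelow {β : ℝ | ∃ φ : Ω → ℝ, Measurable φ ∧ (∀ ω, φ ω ∈ Set.Icc (0:ℝ) 1) ∧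
      (∫ ω, φ ω ∂U) ≤ α ∧ β = 1 - ∫ ω, φ ω ∂V} := by
  refine ⟨0, ?_⟩
  rintro β ⟨φ, hφ, hb, _, rfl⟩
  linarith [integral_le_one V hφ hb]

end Aux

/-- if `T(P,Q) ≥ F` pointwise on `[0,1]`, then
`T(A,B)(α) ≥ F(α + TV(A,P)) - TV(B,Q)` for `α ∈ [0, 1 - TV(A,P)]`. -/
theorem statement_8 {Ω : Type*} [MeasurableSpace Ω] (A P Q B : Measure Ω)
    [IsProbabilityMeasure A] [IsProbabilityMeasure P] [IsProbabilityMeasure Q]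
    [IsProbabilityMeasure B] (F : ℝ → ℝ)
    (hF : ∀ α' ∈ Set.Icc (0:ℝ) 1, tradeOff P Q α' ≥ F α') :
    ∀ α ∈ Set.Icc (0:ℝ) (1 - tvDist A P),
      tradeOff A B α ≥ F (α + tvDist A P) - tvDist B Q := by
  intro α hα
  set s := tvDist A P with hs
  set t := tvDist B Q with ht
  have hs0 : 0 ≤ s := tvDist_nonneg A P
  have ht0 : 0 ≤ t := tvDist_nonneg B Q
  have hαs : α + s ∈ Set.Icc (0:ℝ) 1 := ⟨by linarith [hα.1], by linarith [hα.2]⟩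
  rw [ge_iff_le, tradeOff]
  apply le_csInf
  · refine ⟨1, fun ω => (0:ℝ), measurable_const, fun ω => ⟨le_refl 0, zero_le_one⟩, ?_, by simp⟩
    simpa using hα.1
  · rintro β ⟨φ, hφ, hb, hA, rfl⟩
    -- ∫φ dP ≤ α + s
    have hcomm1 : tvDist P A = s := by
      rw [hs]; unfold tvDist; congr 1; ext d
      constructor <;> rintro ⟨S, hS, rfl⟩ <;> exact ⟨S, hS, (abs_sub_comm _ _)⟩
    have h1 : (∫ ω, φ ω ∂P) - (∫ ω, φ ω ∂A) ≤ s :=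
      hcomm1 ▸ integral_sub_le_tvDist P A hφ hb
    have hP : (∫ ω, φ ω ∂P) ≤ α + s := by linarith
    -- tradeOff P Q (α + s) ≤ 1 - ∫φ dQ
    have h2 : tradeOff P Q (α + s) ≤ 1 - ∫ ω, φ ω ∂Q := by
      apply csInf_le (tradeOff_bddBelow P Q)
      exact ⟨φ, hφ, hb, hP, rfl⟩
    -- ∫φ dQ - ∫φ dB ≤ t
    have h3 : (∫ ω, φ ω ∂B) - (∫ ω, φ ω ∂Q) ≤ t :=
      integral_sub_le_tvDist B Q hφ hb
    have h4 := hF (α + s) hαs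
    linarith

end
end
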